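/- Let K be a field and let P, Q, R ∈ K[x] be polynomials without a common factor (their gcd is a unit). Then the K[x]-module Z = {(p,q,r) ∈ K[x]³ : pP + qQ + rR = 0} of syzygies between P, Q, R is a free K[x]-module of rank 2. -/

import Mathlib

open Polynomial

/-- The module of syzygies between three univariate polynomials `P, Q, R`:
triples `(p, q, r)` with `p*P + q*Q + r*R = 0`, as a submodule of `(K[x])³`. -/
noncomputable def syzygyModule {K : Type*} [Field K] (P Q R : K[X]) :
    Submodule K[X] (Fin 3 → K[X]) :=
  LinearMap.ker
    (P • (LinearMap.proj 0 : (Fin 3 → K[X]) →ₗ[K[X]] K[X])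
      + Q • (LinearMap.proj 1 : (Fin 3 → K[X]) →ₗ[K[X]] K[X])
      + R • (LinearMap.proj 2 : (Fin 3 → K[X]) →ₗ[K[X]] K[X]))

theorem syzygyModule_free_rank_two {K : Type*} [Field K] (P Q R : K[X])
    (hcop : ∀ d : K[X], d ∣ P → d ∣ Q → d ∣ R → IsUnit d) :
    Nonempty (Module.Basis (Fin 2) K[X] (syzygyModule P Q R)) := by
  set φ : (Fin 3 → K[X]) →ₗ[K[X]] K[X] :=
    P • (LinearMap.proj 0) + Q • (LinearMap.proj 1) + R • (LinearMap.proj 2) with hφ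
  have hφapp : ∀ v : Fin 3 → K[X], φ v = P * v 0 + Q * v 1 + R * v 2 := by
    intro v; simp [hφ]
  -- Bezout coefficients
  obtain ⟨a, b, c, habc⟩ : ∃ a b c : K[X], a * P + b * Q + c * R = 1 := by
    classical
    set g1 := EuclideanDomain.gcd P Q with hg1
    set g := EuclideanDomain.gcd g1 R with hg
    have hgu : IsUnit g := hcop g
      ((EuclideanDomain.gcd_dvd_left g1 R).trans (EuclideanDomain.gcd_dvd_left P Q))
      ((EuclideanDomain.gcd_dvd_left g1 R).trans (EuclideanDomain.gcd_dvd_right P Q))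
      (EuclideanDomain.gcd_dvd_right g1 R)
    obtain ⟨w, hw⟩ := hgu.exists_right_inv
    have e1 : g1 = P * EuclideanDomain.gcdA P Q + Q * EuclideanDomain.gcdB P Q :=
      EuclideanDomain.gcd_eq_gcd_ab P Q
    have e2 : g = g1 * EuclideanDomain.gcdA g1 R + R * EuclideanDomain.gcdB g1 R :=
      EuclideanDomain.gcd_eq_gcd_ab g1 R
    exact ⟨EuclideanDomain.gcdA P Q * EuclideanDomain.gcdA g1 R * w,
      EuclideanDomain.gcdB P Q * EuclideanDomain.gcdA g1 R * w,
      EuclideanDomain.gcdB g1 R * w,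
      by linear_combination (-(EuclideanDomain.gcdA g1 R * w)) * e1 - w * e2 + hw⟩
  -- φ is surjective
  have hsurj : LinearMap.range φ = ⊤ := by
    rw [LinearMap.range_eq_top]
    intro y
    refine ⟨![y * a, y * b, y * c], ?_⟩
    rw [hφapp]
    show P * (y * a) + Q * (y * b) + R * (y * c) = y
    linear_combination y * habc
  obtain ⟨s, hs⟩ := φ.exists_rightInverse_of_surjective hsurj
  have hsapp : ∀ y, φ (s y) = y := fun y => congrArg (· y) (congrArg DFunLike.coe hs)
  have hsinj : Function.Injective s := fun x y hxy => by
    rw [← hsapp x, ← hsapp y, hxy]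
  have hcompl : IsCompl (LinearMap.ker φ) (LinearMap.range s) := by
    constructor
    · rw [disjoint_iff_inf_le]
      rintro x ⟨hx, y, rfl⟩
      have : y = 0 := by rw [← hsapp y]; exact hx
      simp [this]
    · rw [codisjoint_iff_le_sup]
      intro x _
      have : x = (x - s (φ x)) + s (φ x) := by ring_nf
      rw [this]
      exact Submodule.add_mem_sup (by simp [LinearMap.mem_ker, hsapp]) ⟨φ x, rfl⟩
  obtain ⟨n, bker⟩ := Submodule.basisOfPid (Pi.basisFun K[X] (Fin 3)) (LinearMap.ker φ)
  -- basis of range s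
  have erange : K[X] ≃ₗ[K[X]] LinearMap.range s := LinearEquiv.ofInjective s hsinj
  let brange : Module.Basis (Fin 1) K[X] (LinearMap.range s) :=
    (Module.Basis.singleton (Fin 1) K[X]).map erange
  let btot : Module.Basis (Fin n ⊕ Fin 1) K[X] (Fin 3 → K[X]) :=
    (bker.prod brange).map (Submodule.prodEquivOfIsCompl _ _ hcompl)
  have hcard : n + 1 = 3 := by
    have e := btot.indexEquiv (Pi.basisFun K[X] (Fin 3))
    simpa using Fintype.card_congr e
  have hn : n = 2 := by omega
  exact ⟨(bker.reindex (finCongr hn) : Module.Basis (Fin 2) K[X] (LinearMap.ker φ))⟩
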